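/- Let n ≥ 1, let α₁, …, αₙ ∈ ℝ, and let f : ℝ → ℝ be bounded and uniformly continuous. If Δ_{α₁}⋯Δ_{αₙ} f = 0, then there exist continuous functions f₁, …, fₙ : ℝ → ℝ with fⱼ αⱼ-periodic for each j (such functions are automatically bounded and uniformly continuous) and f = f₁ + ⋯ + fₙ. -/

import Mathlib

/-- The difference operator `Δ_α f (x) = f (x + α) - f x`. -/
def deltaOp (α : ℝ) (f : ℝ → ℝ) : ℝ → ℝ := fun x => f (x + α) - f x

open Filter BoundedContinuousFunction

noncomputable section
namespace BLim

abbrev E := BoundedContinuousFunction ℕ ℝ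

def S (N : ℕ) (a : E) : ℝ := ⨆ n : ℕ, (∑ k ∈ Finset.range N, a (n + k)) / N

lemma term_bound (N : ℕ) (a : E) (n : ℕ) :
    |(∑ k ∈ Finset.range N, a (n + k)) / N| ≤ ‖a‖ := by
  rcases Nat.eq_zero_or_pos N with h | h
  · simp [h, norm_nonneg]
  · rw [abs_div, abs_of_nonneg (by positivity : (0:ℝ) ≤ (N:ℝ)),
      div_le_iff₀ (by positivity)]
    calc |∑ k ∈ Finset.range N, a (n + k)| ≤ ∑ k ∈ Finset.range N, |a (n + k)| :=
          Finset.abs_sum_le_sum_abs _ _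
      _ ≤ ∑ _k ∈ Finset.range N, ‖a‖ := Finset.sum_le_sum fun k _ => by
          simpa [Real.norm_eq_abs] using a.norm_coe_le_norm (n + k)
      _ = ‖a‖ * N := by simp [mul_comm]

lemma bddAbove_terms (N : ℕ) (a : E) :
    BddAbove (Set.range fun n : ℕ => (∑ k ∈ Finset.range N, a (n + k)) / N) := by
  refine ⟨‖a‖, ?_⟩
  rintro _ ⟨n, rfl⟩
  exact (abs_le.1 (term_bound N a n)).2

lemma S_le_norm (N : ℕ) (a : E) : S N a ≤ ‖a‖ :=
  ciSup_le fun n => (abs_le.1 (term_bound N a n)).2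

lemma neg_norm_le_S (N : ℕ) (a : E) : -‖a‖ ≤ S N a :=
  le_trans (abs_le.1 (term_bound N a 0)).1 (le_ciSup (bddAbove_terms N a) 0)

lemma S_add_le (N : ℕ) (a b : E) : S N (a + b) ≤ S N a + S N b := by
  refine ciSup_le fun n => ?_
  have : (∑ k ∈ Finset.range N, (a + b) (n + k)) / N
      = (∑ k ∈ Finset.range N, a (n + k)) / N + (∑ k ∈ Finset.range N, b (n + k)) / N := by
    rw [← add_div, ← Finset.sum_add_distrib]; rfl
  rw [this]
  exact add_le_add (le_ciSup (bddAbove_terms N a) n) (le_ciSup (bddAbove_terms N b) n)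

lemma S_smul (N : ℕ) (c : ℝ) (hc : 0 ≤ c) (a : E) : S N (c • a) = c * S N a := by
  rw [S, S, Real.mul_iSup_of_nonneg hc]
  congr 1; funext n
  simp only [BoundedContinuousFunction.coe_smul, Pi.smul_apply, smul_eq_mul,
    ← Finset.mul_sum, mul_div_assoc]

def p (a : E) : ℝ := limsup (fun N => S N a) atTop

lemma bddUnder_S (a : E) : IsBoundedUnder (· ≤ ·) atTop (fun N => S N a) :=
  isBoundedUnder_of ⟨‖a‖, fun N => S_le_norm N a⟩

lemma bddUnder_S_ge (a : E) : IsBoundedUnder (· ≥ ·) atTop (fun N => S N a) :=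
  isBoundedUnder_of ⟨-‖a‖, fun N => neg_norm_le_S N a⟩

lemma p_le_norm (a : E) : p a ≤ ‖a‖ :=
  limsup_le_of_le (bddUnder_S_ge a).isCoboundedUnder_le
    (Eventually.of_forall fun N => S_le_norm N a)

lemma p_add (a b : E) : p (a + b) ≤ p a + p b := by
  have h1 : p (a + b) ≤ limsup ((fun N => S N a) + fun N => S N b) atTop := by
    refine limsup_le_limsup (Eventually.of_forall fun N => S_add_le N a b)
      (bddUnder_S_ge (a + b)).isCoboundedUnder_le ?_
    exact isBoundedUnder_le_add (bddUnder_S a) (bddUnder_S b)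
  exact h1.trans (limsup_add_le (bddUnder_S_ge a) (bddUnder_S a)
    (bddUnder_S_ge b).isCoboundedUnder_le (bddUnder_S b))

lemma p_smul (c : ℝ) (hc : 0 < c) (a : E) : p (c • a) = c * p a := by
  have h : (fun N => S N (c • a)) = (fun x => c * x) ∘ fun N => S N a := by
    funext N; exact S_smul N c hc.le a
  rw [p, h, p]
  exact ((Monotone.map_limsup_of_continuousAt (f := fun x => c * x)
    (fun x y hxy => mul_le_mul_of_nonneg_left hxy hc.le) (fun N => S N a)
    ((continuous_const.mul continuous_id).continuousAt)
    (bddUnder_S a) (bddUnder_S_ge a).isCoboundedUnder_le)).symm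


def shift (a : E) : E := a.compContinuous ⟨fun n => n + 1, continuous_of_discreteTopology⟩

@[simp] lemma shift_apply (a : E) (n : ℕ) : shift a n = a (n + 1) := rfl

lemma sum_shift_sub (a : E) (n N : ℕ) :
    ∑ k ∈ Finset.range N, (shift a - a) (n + k) = a (n + N) - a n := by
  have := Finset.sum_range_sub (fun k => a (n + k)) N
  simp only [Nat.add_zero] at this
  rw [← this]
  refine Finset.sum_congr rfl fun k _ => ?_
  simp only [BoundedContinuousFunction.coe_sub, Pi.sub_apply, shift_apply, Nat.add_succ]

lemma p_shift_sub (a : E) : p (shift a - a) ≤ 0 := by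
  have key : ∀ N : ℕ, 1 ≤ N → S N (shift a - a) ≤ 2 * ‖a‖ / N := by
    intro N hN
    refine ciSup_le fun n => ?_
    rw [sum_shift_sub]
    have hN' : (0:ℝ) < N := by exact_mod_cast hN
    rw [div_le_div_iff_of_pos_right hN']
    have h1 := a.norm_coe_le_norm (n + N); have h2 := a.norm_coe_le_norm n
    simp only [Real.norm_eq_abs] at h1 h2
    have := le_abs_self (a (n + N)); have := neg_abs_le (a n)
    linarith
  have h0 : Tendsto (fun N : ℕ => 2 * ‖a‖ / N) atTop (nhds 0) :=
    tendsto_const_div_atTop_nhds_zero_nat _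
  have : limsup (fun N => S N (shift a - a)) atTop ≤ limsup (fun N : ℕ => 2 * ‖a‖ / N) atTop := by
    refine limsup_le_limsup ?_ (bddUnder_S_ge _).isCoboundedUnder_le ?_
    · filter_upwards [eventually_ge_atTop 1] with N hN using key N hN
    · exact h0.isBoundedUnder_le
  rw [p]
  exact this.trans_eq h0.limsup_eq

lemma p_sub_shift (a : E) : p (a - shift a) ≤ 0 := by
  have key : ∀ N : ℕ, 1 ≤ N → S N (a - shift a) ≤ 2 * ‖a‖ / N := by
    intro N hN
    refine ciSup_le fun n => ?_
    have : ∑ k ∈ Finset.range N, (a - shift a) (n + k) = a n - a (n + N) := by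
      have := sum_shift_sub a n N
      have h2 : ∀ k, (a - shift a) (n + k) = -((shift a - a) (n + k)) := by intro k; simp
      rw [Finset.sum_congr rfl (fun k _ => h2 k), Finset.sum_neg_distrib, this]; ring
    rw [this]
    have hN' : (0:ℝ) < N := by exact_mod_cast hN
    rw [div_le_div_iff_of_pos_right hN']
    have h1 := a.norm_coe_le_norm (n + N); have h2 := a.norm_coe_le_norm n
    simp only [Real.norm_eq_abs] at h1 h2
    have := le_abs_self (a n); have := neg_abs_le (a (n + N))
    linarith
  have h0 : Tendsto (fun N : ℕ => 2 * ‖a‖ / N) atTop (nhds 0) :=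
    tendsto_const_div_atTop_nhds_zero_nat _
  have : limsup (fun N => S N (a - shift a)) atTop ≤ limsup (fun N : ℕ => 2 * ‖a‖ / N) atTop := by
    refine limsup_le_limsup ?_ (bddUnder_S_ge _).isCoboundedUnder_le ?_
    · filter_upwards [eventually_ge_atTop 1] with N hN using key N hN
    · exact h0.isBoundedUnder_le
  rw [p]
  exact this.trans_eq h0.limsup_eq

lemma p_const (c : ℝ) : p (BoundedContinuousFunction.const ℕ c) = c := by
  have key : ∀ N : ℕ, 1 ≤ N → S N (BoundedContinuousFunction.const ℕ c) = c := by
    intro N hN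
    have : ∀ n : ℕ, (∑ k ∈ Finset.range N, (BoundedContinuousFunction.const ℕ c) (n + k)) / N
        = c := by
      intro n
      simp only [BoundedContinuousFunction.const_apply, Finset.sum_const, Finset.card_range,
        nsmul_eq_mul]
      field_simp
    rw [S]
    simp only [this, ciSup_const]
  rw [p]
  have : limsup (fun N => S N (BoundedContinuousFunction.const ℕ c)) atTop
      = limsup (fun _ : ℕ => c) atTop := by
    refine limsup_congr ?_
    filter_upwards [eventually_ge_atTop 1] with N hN using key N hN
  rw [this, limsup_const]

theorem exists_L : ∃ L : E →ₗ[ℝ] ℝ, ∀ a, L a ≤ p a := by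
  have p0 : p 0 = 0 := by
    have := p_const 0
    rwa [show BoundedContinuousFunction.const ℕ (0:ℝ) = 0 by ext; simp] at this
  obtain ⟨L, -, hL⟩ := exists_extension_of_le_sublinear
    ((0 : E →ₗ[ℝ] ℝ).toPMap ⊥) p
    (fun c hc a => p_smul c hc a)
    p_add
    (fun x => by
      have hx : (x : E) = 0 := (Submodule.mem_bot ℝ).mp x.2
      simp [LinearMap.toPMap, hx, p0]
      exact le_of_eq rfl)
  exact ⟨L, hL⟩


def L : E →ₗ[ℝ] ℝ := exists_L.choose

lemma L_le (a : E) : L a ≤ p a := exists_L.choose_spec a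

lemma neg_norm_le_L (a : E) : -‖a‖ ≤ L a := by
  have := (L_le (-a)).trans (p_le_norm (-a))
  rw [map_neg, norm_neg] at this
  linarith

lemma L_le_norm (a : E) : L a ≤ ‖a‖ := (L_le a).trans (p_le_norm a)

lemma L_const (c : ℝ) : L (BoundedContinuousFunction.const ℕ c) = c := by
  have h1 : L (BoundedContinuousFunction.const ℕ c) ≤ c := (L_le _).trans_eq (p_const c)
  have hneg : -(BoundedContinuousFunction.const ℕ c) = BoundedContinuousFunction.const ℕ (-c) := by
    ext k; simp
  have h2 : -(L (BoundedContinuousFunction.const ℕ c)) ≤ -c := by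
    rw [← map_neg, hneg]
    exact (L_le _).trans_eq (p_const (-c))
  linarith

lemma L_shift (a : E) : L (shift a) = L a := by
  have h1 : L (shift a) - L a ≤ 0 := by
    rw [← map_sub]; exact (L_le _).trans (p_shift_sub a)
  have h2 : L a - L (shift a) ≤ 0 := by
    rw [← map_sub]; exact (L_le _).trans (p_sub_shift a)
  linarith

end BLim

section Mean

open BLim

open Classical in
/-- The bounded sequence `k ↦ f (x + k * a)` (junk value if `f` unbounded). -/
noncomputable def seqOf (a : ℝ) (f : ℝ → ℝ) (x : ℝ) : E :=
  if h : ∃ C : ℝ, ∀ y, |f y| ≤ C then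
    ⟨⟨fun k : ℕ => f (x + k * a), continuous_of_discreteTopology⟩,
      ⟨2 * h.choose, fun u v => by
        have hu := h.choose_spec (x + u * a)
        have hv := h.choose_spec (x + v * a)
        rw [Real.dist_eq]
        have := abs_sub (f (x + u * a)) (f (x + v * a))
        calc |f (x + u * a) - f (x + v * a)| ≤ |f (x + u * a)| + |f (x + v * a)| :=
              abs_sub _ _
          _ ≤ 2 * h.choose := by linarith⟩⟩
  else 0

lemma seqOf_apply {f : ℝ → ℝ} (h : ∃ C : ℝ, ∀ y, |f y| ≤ C) (a x : ℝ) (k : ℕ) :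
    seqOf a f x k = f (x + k * a) := by
  classical
  rw [seqOf, dif_pos h]; rfl

/-- The invariant mean of `f` along the orbit `x + ℕ·a`. -/
noncomputable def meanOp (a : ℝ) (f : ℝ → ℝ) (x : ℝ) : ℝ := L (seqOf a f x)

lemma bounded_deltaOp {f : ℝ → ℝ} (b : ℝ) (h : ∃ C : ℝ, ∀ y, |f y| ≤ C) :
    ∃ C : ℝ, ∀ y, |deltaOp b f y| ≤ C := by
  obtain ⟨C, hC⟩ := h
  exact ⟨2 * C, fun y => by
    have h1 := hC (y + b); have h2 := hC y
    calc |deltaOp b f y| = |f (y + b) - f y| := rfl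
      _ ≤ |f (y + b)| + |f y| := abs_sub _ _
      _ ≤ 2 * C := by linarith⟩

lemma bounded_foldr {f : ℝ → ℝ} (l : List ℝ) (h : ∃ C : ℝ, ∀ y, |f y| ≤ C) :
    ∃ C : ℝ, ∀ y, |l.foldr deltaOp f y| ≤ C := by
  induction l with
  | nil => exact h
  | cons b t ih => exact bounded_deltaOp b ih

lemma norm_seqOf_le {f : ℝ → ℝ} {C : ℝ} (hC : ∀ y, |f y| ≤ C) (a x : ℝ) :
    ‖seqOf a f x‖ ≤ C := by
  have h : ∃ C : ℝ, ∀ y, |f y| ≤ C := ⟨C, hC⟩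
  have hC0 : 0 ≤ C := (abs_nonneg _).trans (hC 0)
  refine BoundedContinuousFunction.norm_le hC0 |>.2 fun k => ?_
  rw [seqOf_apply h, Real.norm_eq_abs]
  exact hC _

lemma abs_meanOp_le {f : ℝ → ℝ} {C : ℝ} (hC : ∀ y, |f y| ≤ C) (a x : ℝ) :
    |meanOp a f x| ≤ C := by
  have h1 := L_le_norm (seqOf a f x)
  have h2 := neg_norm_le_L (seqOf a f x)
  have h3 := norm_seqOf_le hC a x
  rw [meanOp, abs_le]; constructor <;> linarith

lemma meanOp_unif {f : ℝ → ℝ} (h : ∃ C : ℝ, ∀ y, |f y| ≤ C) (hu : UniformContinuous f)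
    (a : ℝ) : UniformContinuous (meanOp a f) := by
  rw [Metric.uniformContinuous_iff] at hu ⊢
  intro ε hε
  obtain ⟨δ, hδ, hδ'⟩ := hu (ε / 2) (by linarith)
  refine ⟨δ, hδ, fun {x y} hxy => ?_⟩
  have key : ‖seqOf a f x - seqOf a f y‖ ≤ ε / 2 := by
    refine BoundedContinuousFunction.norm_le (by linarith) |>.2 fun k => ?_
    simp only [BoundedContinuousFunction.coe_sub, Pi.sub_apply, seqOf_apply h,
      Real.norm_eq_abs]
    have : dist (x + k * a) (y + k * a) < δ := by
      rw [Real.dist_eq]; rw [Real.dist_eq] at hxy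
      simpa using hxy
    exact le_of_lt (by simpa [Real.dist_eq] using hδ' this)
  have h1 := L_le_norm (seqOf a f x - seqOf a f y)
  have h2 := neg_norm_le_L (seqOf a f x - seqOf a f y)
  rw [map_sub] at h1 h2
  rw [Real.dist_eq, meanOp, meanOp]
  have habs : |L (seqOf a f x) - L (seqOf a f y)| ≤ ε / 2 :=
    abs_le.2 ⟨by linarith, by linarith⟩
  linarith [abs_le.1 habs, le_abs_self (L (seqOf a f x) - L (seqOf a f y))]

lemma meanOp_periodic {f : ℝ → ℝ} (h : ∃ C : ℝ, ∀ y, |f y| ≤ C) (a x : ℝ) :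
    meanOp a f (x + a) = meanOp a f x := by
  have : seqOf a f (x + a) = shift (seqOf a f x) := by
    ext k
    rw [seqOf_apply h, shift_apply, seqOf_apply h]
    push_cast
    ring_nf
  rw [meanOp, this, L_shift, meanOp]

lemma meanOp_deltaOp {f : ℝ → ℝ} (h : ∃ C : ℝ, ∀ y, |f y| ≤ C) (a b : ℝ) :
    deltaOp b (meanOp a f) = meanOp a (deltaOp b f) := by
  funext x
  have key : seqOf a f (x + b) - seqOf a f x = seqOf a (deltaOp b f) x := by
    ext k
    simp only [BoundedContinuousFunction.coe_sub, Pi.sub_apply, seqOf_apply h,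
      seqOf_apply (bounded_deltaOp b h)]
    show f (x + b + k * a) - f (x + k * a) = f (x + k * a + b) - f (x + k * a)
    ring_nf
  show meanOp a f (x + b) - meanOp a f x = meanOp a (deltaOp b f) x
  rw [meanOp, meanOp, meanOp, ← map_sub, key]

lemma meanOp_foldr {f : ℝ → ℝ} (h : ∃ C : ℝ, ∀ y, |f y| ≤ C) (a : ℝ) (l : List ℝ) :
    l.foldr deltaOp (meanOp a f) = meanOp a (l.foldr deltaOp f) := by
  induction l with
  | nil => rfl
  | cons b t ih =>
      show deltaOp b (t.foldr deltaOp (meanOp a f)) = _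
      rw [ih, meanOp_deltaOp (bounded_foldr t h)]
      rfl

lemma meanOp_of_periodic {F : ℝ → ℝ} (h : ∃ C : ℝ, ∀ y, |F y| ≤ C) (a : ℝ)
    (hp : ∀ x, F (x + a) = F x) : meanOp a F = F := by
  funext x
  have hconst : ∀ k : ℕ, F (x + k * a) = F x := by
    intro k
    induction k with
    | zero => simp
    | succ m ih =>
        have : x + (m + 1 : ℕ) * a = (x + m * a) + a := by push_cast; ring
        rw [this, hp, ih]
  have : seqOf a F x = BoundedContinuousFunction.const ℕ (F x) := by
    ext k
    rw [seqOf_apply h, hconst k]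
    rfl
  rw [meanOp, this, L_const]

lemma deltaOp_sub (b : ℝ) (f g : ℝ → ℝ) :
    deltaOp b (fun x => f x - g x) = fun x => deltaOp b f x - deltaOp b g x := by
  funext x; simp only [deltaOp]; ring

lemma foldr_sub (l : List ℝ) (f g : ℝ → ℝ) :
    l.foldr deltaOp (fun x => f x - g x)
      = fun x => l.foldr deltaOp f x - l.foldr deltaOp g x := by
  induction l with
  | nil => rfl
  | cons b t ih =>
      show deltaOp b (t.foldr deltaOp fun x => f x - g x) = _
      rw [ih, deltaOp_sub]
      rfl

end Mean

lemma main_decomp (l : List ℝ) :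
    ∀ f : ℝ → ℝ, (∃ C : ℝ, ∀ x, |f x| ≤ C) → UniformContinuous f →
      l.foldr deltaOp f = 0 →
      ∃ g : List (ℝ → ℝ),
        List.Forall₂ (fun b gf => Continuous gf ∧ ∀ x, gf (x + b) = gf x) l g ∧
        ∀ x, f x = (g.map (fun gf => gf x)).sum := by
  induction l with
  | nil =>
      intro f _ _ hd
      exact ⟨[], List.Forall₂.nil, fun x => by
        have := congrFun hd x; simpa using this⟩
  | cons a t ih =>
      intro f hb hu hd
      have hF : ∀ x, (t.foldr deltaOp f) (x + a) = (t.foldr deltaOp f) x := by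
        intro x
        have h0 : (t.foldr deltaOp f) (x + a) - (t.foldr deltaOp f) x = 0 := congrFun hd x
        linarith
      set f₁ := meanOp a f with hf₁
      have hbF := bounded_foldr t hb
      have h1 : t.foldr deltaOp f₁ = t.foldr deltaOp f := by
        rw [hf₁, meanOp_foldr hb, meanOp_of_periodic hbF a hF]
      have hr_fold : t.foldr deltaOp (fun x => f x - f₁ x) = 0 := by
        rw [foldr_sub, h1]
        funext x; simp
      obtain ⟨C, hC⟩ := hb
      have hrb : ∃ C : ℝ, ∀ x, |f x - f₁ x| ≤ C :=
        ⟨2 * C, fun x => by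
          have h2 := abs_meanOp_le hC a x
          have h3 := hC x
          calc |f x - f₁ x| ≤ |f x| + |f₁ x| := abs_sub _ _
            _ ≤ 2 * C := by rw [hf₁]; linarith⟩
      have hru : UniformContinuous (fun x => f x - f₁ x) :=
        hu.sub (meanOp_unif ⟨C, hC⟩ hu a)
      obtain ⟨gs, hgs, hsum⟩ := ih _ hrb hru hr_fold
      refine ⟨f₁ :: gs, List.Forall₂.cons
        ⟨(meanOp_unif ⟨C, hC⟩ hu a).continuous, fun x => meanOp_periodic ⟨C, hC⟩ a x⟩ hgs, ?_⟩
      intro x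
      simp only [List.map_cons, List.sum_cons]
      have := hsum x
      linarith

theorem stmt_3 (n : ℕ) (hn : 1 ≤ n) (α : Fin n → ℝ) (f : ℝ → ℝ)
    (hbdd : ∃ C : ℝ, ∀ x, |f x| ≤ C) (hunif : UniformContinuous f)
    (hdiff : (List.ofFn α).foldr deltaOp f = 0) :
    ∃ g : Fin n → ℝ → ℝ, (∀ j, Continuous (g j)) ∧ (∀ j x, g j (x + α j) = g j x) ∧
      ∀ x, f x = ∑ j, g j x := by
  obtain ⟨g, hg, hsum⟩ := main_decomp (List.ofFn α) f hbdd hunif hdiff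
  have hn2 : n = g.length := by
    have := hg.length_eq
    simpa using this
  refine ⟨fun j => g.get (Fin.cast hn2 j), ?_, ?_, ?_⟩
  · intro j
    have := (List.forall₂_iff_get.mp hg).2 j (by simp) (by rw [← hn2]; exact j.2)
    rw [List.get_ofFn] at this
    exact this.1
  · intro j x
    have := (List.forall₂_iff_get.mp hg).2 j (by simp) (by rw [← hn2]; exact j.2)
    rw [List.get_ofFn] at this
    have h2 := this.2 x
    simpa using h2
  · intro x
    rw [hsum x]
    have hmap : g.map (fun gf => gf x) = List.ofFn (fun i : Fin g.length => g.get i x) := by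
      conv_lhs => rw [← List.ofFn_get g]
      rw [List.map_ofFn]
      rfl
    rw [hmap, List.sum_ofFn]
    exact (Fin.sum_congr' (fun i : Fin g.length => g.get i x) hn2).symm
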